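/- Let (X,d) be a complete metric space and T : X → X be an (E,F)-contraction. Then T is a CJMP-contraction, hence a Picard operator. -/

import Mathlib

open Filter Topology

/-- `T` is a Picard operator: it has a unique fixed point `u` and every
sequence of iterates converges to `u`. -/
def IsPicardOperator {X : Type*} [MetricSpace X] (T : X → X) : Prop :=
  ∃ u : X, T u = u ∧ (∀ v : X, T v = v → v = u) ∧
    ∀ x : X, Tendsto (fun n => T^[n] x) atTop (𝓝 u)

/-- `T` is contractive: `d(Tx,Ty) < d(x,y)` whenever `x ≠ y`. -/
def Contractive {X : Type*} [MetricSpace X] (T : X → X) : Prop :=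
  ∀ x y : X, x ≠ y → dist (T x) (T y) < dist x y

/-- The Matkowski–Węgrzyk condition. -/
def MWCondition {X : Type*} [MetricSpace X] (T : X → X) : Prop :=
  ∀ ε > (0 : ℝ), ∃ δ > (0 : ℝ), ∀ x y : X,
    ε < dist x y → dist x y < ε + δ → dist (T x) (T y) ≤ ε

/-- `T` is a CJMP-contraction. -/
def IsCJMP {X : Type*} [MetricSpace X] (T : X → X) : Prop :=
  Contractive T ∧ MWCondition T

private lemma limsup_nonpos_of_nonpos (f : ℕ → ℝ) (h : ∀ n, f n ≤ 0) :
    limsup f atTop ≤ 0 := by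
  rw [Filter.limsup_eq]
  by_cases hb : BddBelow {a : ℝ | ∀ᶠ n in atTop, f n ≤ a}
  · exact csInf_le hb (Eventually.of_forall h)
  · rw [Real.sInf_of_not_bddBelow hb]

theorem stmt_6 {X : Type*} [MetricSpace X] [CompleteSpace X] [Nonempty X] (T : X → X)
    (E F : ℝ → ℝ)
    (hC1 : ∀ t s : ℝ, 0 < t → t ≤ s → E t < F s)
    (hC2 : ∀ t > (0 : ℝ), ∀ tn : ℕ → ℝ, (∀ n, t < tn n) → Tendsto tn atTop (𝓝 t) →
      ∀ sn : ℕ → ℝ, (∀ n, t < sn n ∧ sn n < tn n) →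
        0 < limsup (fun n => F (sn n) - E (tn n)) atTop)
    (hcontr : ∀ x y : X, T x ≠ T y → F (dist (T x) (T y)) ≤ E (dist x y)) :
    IsCJMP T ∧ IsPicardOperator T := by
  -- T is contractive
  have hcontr' : Contractive T := by
    intro x y hxy
    by_cases h : T x = T y
    · rw [h]
      simpa using dist_pos.mpr hxy
    · by_contra hlt
      push_neg at hlt
      have h1 := hcontr x y h
      have h2 := hC1 (dist x y) (dist (T x) (T y)) (dist_pos.mpr hxy) hlt
      linarith
  -- nonexpansive
  have hnonexp : ∀ x y : X, dist (T x) (T y) ≤ dist x y := by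
    intro x y
    by_cases h : x = y
    · simp [h]
    · exact (hcontr' x y h).le
  -- MW condition
  have hMW : MWCondition T := by
    intro ε hε
    by_contra hno
    push_neg at hno
    have H : ∀ n : ℕ, ∃ x y : X, ε < dist x y ∧ dist x y < ε + 1/(n+1) ∧
        ε < dist (T x) (T y) := by
      intro n
      obtain ⟨x, y, h1, h2, h3⟩ := hno (1/(n+1)) (by positivity)
      exact ⟨x, y, h1, h2, h3⟩
    choose xs ys h1 h2 h3 using H
    set tn : ℕ → ℝ := fun n => dist (xs n) (ys n) with htn
    set sn : ℕ → ℝ := fun n => dist (T (xs n)) (T (ys n)) with hsn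
    have htend : Tendsto tn atTop (𝓝 ε) := by
      have hupper : Tendsto (fun n : ℕ => ε + 1/(n+1 : ℝ)) atTop (𝓝 ε) := by
        have : Tendsto (fun n : ℕ => 1 / ((n : ℝ) + 1)) atTop (𝓝 0) :=
          tendsto_one_div_add_atTop_nhds_zero_nat
        have := (tendsto_const_nhds (x := ε) (f := atTop (α := ℕ))).add this
        simpa using this
      exact tendsto_of_tendsto_of_tendsto_of_le_of_le tendsto_const_nhds hupper
        (fun n => (h1 n).le) (fun n => (h2 n).le)
    have hne : ∀ n, xs n ≠ ys n := by
      intro n h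
      have := h1 n
      simp [htn, h] at this
      linarith
    have hsnlt : ∀ n, ε < sn n ∧ sn n < tn n :=
      fun n => ⟨h3 n, hcontr' _ _ (hne n)⟩
    have key := hC2 ε hε tn h1 htend sn hsnlt
    have hTne : ∀ n, T (xs n) ≠ T (ys n) := by
      intro n h
      have := h3 n
      simp [hsn, h] at this
      linarith
    have hle : ∀ n, F (sn n) - E (tn n) ≤ 0 := by
      intro n
      have := hcontr (xs n) (ys n) (hTne n)
      simpa [hsn, htn] using sub_nonpos.mpr this
    have := limsup_nonpos_of_nonpos _ hle
    linarith
  refine ⟨⟨hcontr', hMW⟩, ?_⟩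
  -- T is continuous
  have hTcont : Continuous T :=
    LipschitzWith.continuous (K := 1) (LipschitzWith.of_dist_le_mul fun x y => by
      simpa using hnonexp x y)
  -- every orbit converges to a fixed point
  have key : ∀ x : X, ∃ u : X, T u = u ∧ Tendsto (fun n => T^[n] x) atTop (𝓝 u) := by
    intro x
    have hit : ∀ n : ℕ, T^[n+1] x = T (T^[n] x) :=
      fun n => Function.iterate_succ_apply' T n x
    set a : ℕ → ℝ := fun n => dist (T^[n] x) (T^[n+1] x) with ha
    have hsucc : ∀ n, a (n+1) ≤ a n := by
      intro n
      have : a (n+1) = dist (T (T^[n] x)) (T (T^[n+1] x)) := by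
        simp only [ha]
        rw [hit (n+1), hit n]
      rw [this]
      exact hnonexp _ _
    have hanti : Antitone a := antitone_nat_of_succ_le hsucc
    have hbdd : BddBelow (Set.range a) := ⟨0, fun y ⟨n, hn⟩ => hn ▸ dist_nonneg⟩
    have htend : Tendsto a atTop (𝓝 (⨅ n, a n)) := tendsto_atTop_ciInf hanti hbdd
    set L := ⨅ n, a n with hLdef
    have hL0 : 0 ≤ L := le_ciInf fun n => dist_nonneg
    have hLz : L = 0 := by
      by_contra hne'
      have hLpos : 0 < L := lt_of_le_of_ne hL0 (Ne.symm hne')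
      have hgt : ∀ n, L < a n := by
        intro n
        rcases lt_or_eq_of_le (ciInf_le hbdd n : L ≤ a n) with h | h
        · exact h
        · exfalso
          have hpos : 0 < a n := h ▸ hLpos
          have hneq : T^[n] x ≠ T^[n+1] x := by
            intro he
            rw [ha] at hpos
            simp only [he, dist_self] at hpos
            exact lt_irrefl _ hpos
          have hlt : a (n+1) < a n := by
            have : a (n+1) = dist (T (T^[n] x)) (T (T^[n+1] x)) := by
              simp only [ha]; rw [hit (n+1), hit n]
            rw [this]
            exact hcontr' _ _ hneq
          have := ciInf_le hbdd (n+1)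
          rw [← hLdef] at this
          rw [← h] at hlt
          linarith
      obtain ⟨δ, hδ, hMWδ⟩ := hMW L hLpos
      have : ∀ᶠ n in atTop, a n < L + δ :=
        htend.eventually (eventually_lt_nhds (by linarith))
      obtain ⟨n, hn⟩ := this.exists
      have h2 : a (n+1) ≤ L := by
        have : a (n+1) = dist (T (T^[n] x)) (T (T^[n+1] x)) := by
          simp only [ha]; rw [hit (n+1), hit n]
        rw [this]
        exact hMWδ _ _ (hgt n) hn
      exact absurd (hgt (n+1)) (not_lt.mpr h2)
    have ha0 : Tendsto a atTop (𝓝 0) := hLz ▸ htend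
    -- Cauchy
    have hcauchy : CauchySeq (fun n => T^[n] x) := by
      rw [Metric.cauchySeq_iff']
      intro ε hε
      set ε' := ε/2 with hε'def
      have hε' : 0 < ε' := by positivity
      obtain ⟨δ, hδ, hMWδ⟩ := hMW ε' hε'
      set δ' := min δ ε' with hδ'def
      have hδ' : 0 < δ' := lt_min hδ hε'
      have : ∀ᶠ n in atTop, a n < δ' :=
        ha0.eventually (eventually_lt_nhds hδ')
      obtain ⟨N, hN⟩ := eventually_atTop.mp this
      have claim : ∀ k : ℕ, ∀ n ≥ N, dist (T^[n] x) (T^[n+k] x) < ε' + δ' := by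
        intro k
        induction k with
        | zero => intro n hn; simpa using add_pos hε' hδ'
        | succ k ih =>
          intro n hn
          have hstep : dist (T^[n+1] x) (T^[n+1+k] x) ≤ ε' := by
            have e2 : T^[n+1+k] x = T (T^[n+k] x) := by
              rw [show n+1+k = (n+k)+1 by ring, hit]
            rw [hit n, e2]
            by_cases hle : dist (T^[n] x) (T^[n+k] x) ≤ ε'
            · exact le_trans (hnonexp _ _) hle
            · push_neg at hle
              refine hMWδ _ _ hle ?_
              have := ih n hn
              have hδδ : δ' ≤ δ := min_le_left _ _
              linarith
          have han : a n < δ' := hN n hn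
          calc dist (T^[n] x) (T^[n+(k+1)] x)
              ≤ dist (T^[n] x) (T^[n+1] x) + dist (T^[n+1] x) (T^[n+1+k] x) := by
                rw [show n+(k+1) = n+1+k by ring]
                exact dist_triangle _ _ _
            _ < δ' + ε' := by
                have : dist (T^[n] x) (T^[n+1] x) = a n := rfl
                linarith
            _ = ε' + δ' := by ring
      refine ⟨N, fun n hn => ?_⟩
      obtain ⟨k, rfl⟩ := Nat.exists_eq_add_of_le hn
      have := claim k N le_rfl
      have hδε : δ' ≤ ε' := min_le_right _ _
      rw [dist_comm]
      calc dist (T^[N] x) (T^[N+k] x) < ε' + δ' := this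
        _ ≤ ε' + ε' := by linarith
        _ = ε := by rw [hε'def]; ring
    obtain ⟨u, hu⟩ := cauchySeq_tendsto_of_complete hcauchy
    refine ⟨u, ?_, hu⟩
    have h1 : Tendsto (fun n => T^[n+1] x) atTop (𝓝 u) :=
      hu.comp (tendsto_add_atTop_nat 1)
    have h2 : Tendsto (fun n => T (T^[n] x)) atTop (𝓝 (T u)) :=
      (hTcont.tendsto u).comp hu
    have heq : (fun n => T^[n+1] x) = fun n => T (T^[n] x) := funext hit
    rw [heq] at h1
    exact tendsto_nhds_unique h2 h1
  obtain ⟨u, huf, hut⟩ := key (Classical.arbitrary X)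
  have huniq : ∀ v : X, T v = v → v = u := by
    intro v hv
    by_contra hne
    have := hcontr' v u hne
    rw [hv, huf] at this
    exact lt_irrefl _ this
  refine ⟨u, huf, huniq, fun x => ?_⟩
  obtain ⟨w, hwf, hwt⟩ := key x
  rwa [huniq w hwf] at hwt
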